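/- For every discount factor λ with 1/2 < λ < 1, there exists an infinite word w over {a,b} such that every finite prefix of w is ambiguous, and consequently the discounted sum of a's in w equals exactly 1, i.e., Σ_{i : w_i = a} λ^(i-1) = 1. -/

import Mathlib

/-- Discounted count of `a`'s (encoded as `true`) in a finite word. -/
def va (lam : ℝ) (w : List Bool) : ℝ :=
  ∑ i ∈ Finset.range w.length, if w.getD i false then lam ^ i else 0

/-- A finite word is ambiguous if `1 - lam^|w|/(1-lam) ≤ v_a(w) < 1`. -/
def Ambiguous (lam : ℝ) (w : List Bool) : Prop :=
  1 - lam ^ w.length / (1 - lam) ≤ va lam w ∧ va lam w < 1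

/-- Partial sums of the greedy expansion of 1 in base `lam`. -/
noncomputable def gs (lam : ℝ) : ℕ → ℝ
  | 0 => 0
  | n + 1 => if gs lam n + lam ^ n < 1 then gs lam n + lam ^ n else gs lam n

/-- The greedy word. -/
noncomputable def gw (lam : ℝ) (n : ℕ) : Bool :=
  if gs lam n + lam ^ n < 1 then true else false

lemma gs_succ (lam : ℝ) (n : ℕ) :
    gs lam (n + 1) = gs lam n + (if gw lam n then lam ^ n else 0) := by
  simp only [gs, gw]
  split <;> simp

lemma getD_ofFn_lt (f : ℕ → Bool) (m i : ℕ) (hi : i < m) :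
    (List.ofFn fun j : Fin m => f j).getD i false = f i := by
  rw [List.getD_eq_getElem _ _ (by simpa using hi), List.getElem_ofFn]

lemma va_prefix (lam : ℝ) (n : ℕ) :
    va lam (List.ofFn fun i : Fin n => gw lam i) = gs lam n := by
  induction n with
  | zero => simp [va, gs]
  | succ n ih =>
    rw [gs_succ, ← ih]
    simp only [va, List.length_ofFn]
    rw [Finset.sum_range_succ]
    congr 1
    · apply Finset.sum_congr rfl
      intro i hi
      have hi' := Finset.mem_range.mp hi
      rw [getD_ofFn_lt _ _ _ (Nat.lt_succ_of_lt hi'), getD_ofFn_lt _ _ _ hi']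
    · rw [getD_ofFn_lt _ _ _ (Nat.lt_succ_self n)]

lemma gs_invariant (lam : ℝ) (hl : 1/2 < lam) (hl1 : lam < 1) (n : ℕ) :
    1 - lam ^ n / (1 - lam) ≤ gs lam n ∧ gs lam n < 1 := by
  have hpos : (0:ℝ) < lam := lt_trans (by norm_num) hl
  have h1l : (0:ℝ) < 1 - lam := by linarith
  induction n with
  | zero =>
    constructor
    · simp only [pow_zero, gs]
      rw [sub_nonpos.symm]
      have : (1:ℝ) ≤ 1 / (1 - lam) := by
        rw [le_div_iff₀ h1l]; linarith
      linarith
    · simp [gs]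
  | succ n ih =>
    obtain ⟨ih1, ih2⟩ := ih
    by_cases h : gs lam n + lam ^ n < 1
    · have hs : gs lam (n+1) = gs lam n + lam ^ n := by simp [gs, h]
      constructor
      · rw [hs]
        have heq : lam ^ (n+1) / (1 - lam) = lam ^ n / (1 - lam) - lam ^ n := by
          rw [pow_succ]; field_simp; ring
        linarith
      · rw [hs]; exact h
    · have hs : gs lam (n+1) = gs lam n := by simp [gs, h]
      push_neg at h
      constructor
      · rw [hs]
        have h2 : 1 - lam ^ n ≤ gs lam n := by linarith
        have key : 1 - lam ^ (n+1) / (1 - lam) ≤ 1 - lam ^ n := by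
          have : lam ^ n ≤ lam ^ (n+1) / (1 - lam) := by
            rw [le_div_iff₀ h1l, pow_succ]
            nlinarith [pow_pos hpos n]
          linarith
        linarith
      · rw [hs]; exact ih2

theorem exists_word_all_prefixes_ambiguous (lam : ℝ) (hl : 1/2 < lam) (hl1 : lam < 1) :
    ∃ w : ℕ → Bool,
      (∀ n : ℕ, Ambiguous lam (List.ofFn fun i : Fin n => w i)) ∧
      (∑' i : ℕ, if w i then lam ^ i else 0) = 1 := by
  have hpos : (0:ℝ) < lam := lt_trans (by norm_num) hl
  refine ⟨gw lam, fun n => ?_, ?_⟩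
  · have := gs_invariant lam hl hl1 n
    constructor
    · rw [va_prefix]; simpa using this.1
    · rw [va_prefix]; exact this.2
  · -- the tsum equals 1
    have hsum : Summable (fun i : ℕ => if gw lam i then lam ^ i else 0) := by
      apply Summable.of_nonneg_of_le (fun i => ?_) (fun i => ?_)
        (summable_geometric_of_lt_one hpos.le hl1)
      · split <;> positivity
      · split
        · exact le_refl _
        · positivity
    have hlim : Filter.Tendsto (gs lam) Filter.atTop (nhds 1) := by
      have h1 : Filter.Tendsto (fun n => 1 - lam ^ n / (1 - lam)) Filter.atTop (nhds 1) := by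
        have := tendsto_pow_atTop_nhds_zero_of_lt_one hpos.le hl1
        have := this.div_const (1 - lam)
        simpa using (tendsto_const_nhds (x := (1:ℝ)) (f := Filter.atTop)).sub this
      exact tendsto_of_tendsto_of_tendsto_of_le_of_le h1 tendsto_const_nhds
        (fun n => (gs_invariant lam hl hl1 n).1) (fun n => (gs_invariant lam hl hl1 n).2.le)
    have hps : ∀ n, ∑ i ∈ Finset.range n, (if gw lam i then lam ^ i else 0) = gs lam n := by
      intro n
      induction n with
      | zero => simp [gs]
      | succ n ih => rw [Finset.sum_range_succ, ih, gs_succ]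
    have : HasSum (fun i : ℕ => if gw lam i then lam ^ i else 0) 1 := by
      rw [hsum.hasSum_iff_tendsto_nat]
      simpa only [hps] using hlim
    exact this.tsum_eq
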